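/- Let n ≥ 1 and for (p, v) ∈ US^n let γ_{(p,v)}(t) = cos(πt) p + sin(πt) v. For k ≥ 0 define f_k : Γ_k → C([0,1], S^n) by f_k(p, v₀, …, v_k)(t) = γ_{((−1)^j p, (−1)^j v_j)}((k+1)t − j) for t ∈ [j/(k+1), (j+1)/(k+1)], j = 0, …, k; this is well-defined and continuous, with f_k(p, v̄) ∈ P_a S^n for k even and f_k(p, v̄) ∈ Λ S^n for k odd. Then for all even l, m ≥ 0, setting τ = (l+1)/(l+m+2), for every (p, v₀, …, v_l) ∈ Γ_l and (q, w₀, …, w_m) ∈ Γ_m with q = −p, one has concat^τ(f_l(p, v₀, …, v_l), f_m(q, w₀, …, w_m)) = f_{l+m+1}(p, v₀, …, v_l, −w₀, …, −w_m); in particular the left-hand side is a loop in S^n. -/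

import Mathlib

open unitInterval
open scoped RealInnerProductSpace

/-- Ambient Euclidean space `ℝ^{n+1}`. -/
abbrev Euc (n : ℕ) : Type := EuclideanSpace ℝ (Fin (n + 1))

/-- The `(k+1)`-fold fiber product `Γ_k = US^n ×_{S^n} ⋯ ×_{S^n} US^n`, realized as
tuples `(p, v₀, …, v_k)` with each `(p, vᵢ)` in the unit tangent bundle. -/
abbrev GammaSp (n k : ℕ) : Type :=
  {z : Euc n × (Fin (k + 1) → Euc n) //
    ‖z.1‖ = 1 ∧ ∀ i, ‖z.2 i‖ = 1 ∧ ⟪z.1, z.2 i⟫ = 0}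

noncomputable def sFx (n : ℕ) (p : Euc n) (v : ℕ → Euc n) (K : ℕ) (x : ℝ) : Euc n :=
  Real.cos (Real.pi * x) • p +
    ∑ j ∈ Finset.range K, Real.sin (Real.pi * max (j : ℝ) (min x ((j : ℝ) + 1))) • v j

lemma s17_sinN (j : ℕ) : Real.sin (Real.pi * j) = 0 := by
  rw [mul_comm]; exact Real.sin_nat_mul_pi j

lemma s17_cosN (j : ℕ) : Real.cos (Real.pi * j) = (-1) ^ j := by
  have h := Real.cos_nat_mul_pi_sub 0 j
  simpa [mul_comm] using h

lemma s17_cos_shift (x : ℝ) (j : ℕ) :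
    Real.cos (Real.pi * (x - j)) = (-1) ^ j * Real.cos (Real.pi * x) := by
  rw [mul_sub, Real.cos_sub, s17_sinN, s17_cosN]; ring

lemma s17_sin_shift (x : ℝ) (j : ℕ) :
    Real.sin (Real.pi * (x - j)) = (-1) ^ j * Real.sin (Real.pi * x) := by
  rw [mul_sub, Real.sin_sub, s17_sinN, s17_cosN]; ring

lemma s17_formula (n : ℕ) (p : Euc n) (v : ℕ → Euc n) (K j : ℕ) (hj : j < K) (x : ℝ)
    (h1 : (j : ℝ) ≤ x) (h2 : x ≤ (j : ℝ) + 1) :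
    sFx n p v K x =
      Real.cos (Real.pi * (x - j)) • ((-1 : ℝ) ^ j • p) +
        Real.sin (Real.pi * (x - j)) • ((-1 : ℝ) ^ j • v j) := by
  have hsq : ((-1 : ℝ) ^ j) * ((-1 : ℝ) ^ j) = 1 := by
    rw [← pow_add]; exact Even.neg_one_pow ⟨j, rfl⟩
  unfold sFx
  congr 1
  · rw [smul_smul]
    congr 1
    rw [s17_cos_shift]
    linear_combination (-(Real.cos (Real.pi * x))) * hsq
  · rw [Finset.sum_eq_single_of_mem j (Finset.mem_range.mpr hj)]
    · rw [min_eq_left h2, max_eq_right h1, smul_smul]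
      congr 1
      rw [s17_sin_shift]
      linear_combination (-(Real.sin (Real.pi * x))) * hsq
    · intro b _ hb
      rcases lt_or_gt_of_ne hb with h | h
      · -- b < j : min x (b+1) = b+1
        have hb1 : (b : ℝ) + 1 ≤ x := le_trans (by exact_mod_cast Nat.succ_le_of_lt h) h1
        rw [min_eq_right hb1, max_eq_right (by linarith [Nat.cast_nonneg (α := ℝ) b])]
        have : ((b : ℝ) + 1) = ((b + 1 : ℕ) : ℝ) := by push_cast; ring
        rw [this, s17_sinN, zero_smul]
      · -- b > j : max b (min x (b+1)) = b
        have hxb : x ≤ (b : ℝ) := le_trans h2 (by exact_mod_cast Nat.succ_le_of_lt h)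
        rw [max_eq_left (le_trans (min_le_left _ _) hxb), s17_sinN, zero_smul]

lemma s17_at_zero (n K : ℕ) (p : Euc n) (v : ℕ → Euc n) : sFx n p v K 0 = p := by
  unfold sFx
  rw [Finset.sum_eq_zero, mul_zero, Real.cos_zero, one_smul, add_zero]
  intro j _
  rw [min_eq_left (by positivity), max_eq_left (Nat.cast_nonneg j), s17_sinN, zero_smul]

lemma s17_at_top (n K : ℕ) (p : Euc n) (v : ℕ → Euc n) :
    sFx n p v K (K : ℝ) = ((-1 : ℝ) ^ K) • p := by
  unfold sFx
  rw [Finset.sum_eq_zero, add_zero, s17_cosN]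
  intro j hj
  have hj' : (j : ℝ) + 1 ≤ (K : ℝ) := by
    exact_mod_cast Nat.succ_le_of_lt (Finset.mem_range.mp hj)
  rw [min_eq_right hj', max_eq_right (by linarith [Nat.cast_nonneg (α := ℝ) j])]
  have : ((j : ℝ) + 1) = ((j + 1 : ℕ) : ℝ) := by push_cast; ring
  rw [this, s17_sinN, zero_smul]

lemma s17_unit {E : Type*} [NormedAddCommGroup E] [InnerProductSpace ℝ E]
    (P V : E) (hP : ‖P‖ = 1) (hV : ‖V‖ = 1) (hPV : ⟪P, V⟫ = 0) (a b : ℝ)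
    (hab : a ^ 2 + b ^ 2 = 1) : ‖a • P + b • V‖ = 1 := by
  have key : ‖a • P + b • V‖ ^ 2 = 1 := by
    rw [norm_add_sq_real, real_inner_smul_left, real_inner_smul_right, hPV,
      norm_smul, norm_smul, hP, hV]
    simp only [mul_one, mul_zero, add_zero, Real.norm_eq_abs, sq_abs]
    exact hab
  nlinarith [norm_nonneg (a • P + b • V), key, sq_nonneg (‖a • P + b • V‖ - 1)]

lemma s17_norm (n K : ℕ) (hK : 0 < K) (p : Euc n) (v : ℕ → Euc n)
    (hp : ‖p‖ = 1) (hv : ∀ j < K, ‖v j‖ = 1 ∧ ⟪p, v j⟫ = 0)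
    (x : ℝ) (h0 : 0 ≤ x) (h1 : x ≤ (K : ℝ)) :
    ‖sFx n p v K x‖ = 1 := by
  set j : ℕ := min (Nat.floor x) (K - 1) with hjdef
  have hjK : j < K := lt_of_le_of_lt (min_le_right _ _) (by omega)
  have hjx : (j : ℝ) ≤ x :=
    le_trans (by exact_mod_cast min_le_left _ _) (Nat.floor_le h0)
  have hxj : x ≤ (j : ℝ) + 1 := by
    rcases le_or_gt (Nat.floor x) (K - 1) with h | h
    · have : j = Nat.floor x := min_eq_left h
      rw [this]
      exact le_of_lt (Nat.lt_floor_add_one x)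
    · have hj' : j = K - 1 := min_eq_right (le_of_lt h)
      have hc : ((K - 1 : ℕ) : ℝ) + 1 = (K : ℝ) := by
        have h2 : K - 1 + 1 = K := by omega
        exact_mod_cast congrArg (Nat.cast : ℕ → ℝ) h2
      rw [hj', hc]; exact h1
  rw [s17_formula n p v K j hjK x hjx hxj]
  apply s17_unit
  · rw [norm_smul, hp]; simp
  · rw [norm_smul, (hv j hjK).1]; simp
  · rw [real_inner_smul_left, real_inner_smul_right, (hv j hjK).2]; ring
  · rw [Real.cos_sq_add_sin_sq]

lemma s17_left (n l M : ℕ) (p : Euc n) (v₁ v₂ : ℕ → Euc n)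
    (hv : ∀ j ≤ l, v₁ j = v₂ j) (x : ℝ) (hx : x ≤ (l : ℝ) + 1) :
    sFx n p v₁ (l + 1 + M) x = sFx n p v₂ (l + 1) x := by
  unfold sFx
  congr 1
  rw [← Finset.sum_range_add_sum_Ico _ (Nat.le_add_right (l + 1) M)]
  rw [Finset.sum_eq_zero (s := Finset.Ico (l + 1) (l + 1 + M)), add_zero]
  · exact Finset.sum_congr rfl fun j hj => by
      rw [hv j (Nat.lt_succ_iff.mp (Finset.mem_range.mp hj))]
  · intro j hj
    have hj1 : (l : ℝ) + 1 ≤ (j : ℝ) := by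
      exact_mod_cast (Finset.mem_Ico.mp hj).1
    have hxb : x ≤ (j : ℝ) := le_trans hx hj1
    rw [max_eq_left (le_trans (min_le_left _ _) hxb), s17_sinN, zero_smul]

lemma s17_right (n l m : ℕ) (hl : Even l) (p : Euc n) (v₁ v₂ : ℕ → Euc n)
    (hv : ∀ i ≤ m, v₁ (l + 1 + i) = -(v₂ i)) (x : ℝ) (hx : (l : ℝ) + 1 ≤ x) :
    sFx n p v₁ (l + 1 + (m + 1)) x = sFx n (-p) v₂ (m + 1) (x - ((l : ℝ) + 1)) := by
  have hLc : ((l : ℝ) + 1) = ((l + 1 : ℕ) : ℝ) := by push_cast; ring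
  have hodd : ((-1 : ℝ)) ^ (l + 1) = -1 := Odd.neg_one_pow (Even.add_one hl)
  unfold sFx
  congr 1
  · -- cosine parts
    rw [hLc, s17_cos_shift, hodd]
    rw [neg_one_mul, neg_smul, smul_neg, neg_neg]
  · rw [← Finset.sum_range_add_sum_Ico _ (Nat.le_add_right (l + 1) (m + 1))]
    rw [Finset.sum_eq_zero (s := Finset.range (l + 1)), zero_add]
    · rw [Finset.sum_Ico_eq_sum_range]
      have hcard : l + 1 + (m + 1) - (l + 1) = m + 1 := by omega
      rw [hcard]
      apply Finset.sum_congr rfl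
      intro i hi
      rw [hv i (Nat.lt_succ_iff.mp (Finset.mem_range.mp hi))]
      have e1 : ((l + 1 + i : ℕ) : ℝ) = (i : ℝ) + ((l : ℝ) + 1) := by push_cast; ring
      have e2 : ((l + 1 + i : ℕ) : ℝ) + 1 = ((i : ℝ) + 1) + ((l : ℝ) + 1) := by
        push_cast; ring
      have e3 : min x (((i : ℝ) + 1) + ((l : ℝ) + 1)) =
          min (x - ((l : ℝ) + 1)) ((i : ℝ) + 1) + ((l : ℝ) + 1) := by
        rw [← min_add_add_right]; congr 1; ring
      rw [e2, e1, e3, max_add_add_right]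
      set y := max (i : ℝ) (min (x - ((l : ℝ) + 1)) ((i : ℝ) + 1)) with hy
      have e4 : Real.pi * (y + ((l : ℝ) + 1)) = Real.pi * y + Real.pi * ((l + 1 : ℕ) : ℝ) := by
        push_cast; ring
      rw [e4, Real.sin_add, s17_sinN, s17_cosN, hodd]
      rw [mul_zero, add_zero, mul_neg_one, neg_smul, smul_neg, neg_neg]
    · intro j hj
      have hjl : (j : ℝ) + 1 ≤ x := by
        refine le_trans ?_ hx
        have : (j : ℝ) + 1 ≤ (l : ℝ) + 1 := by
          have := Nat.lt_succ_iff.mp (Finset.mem_range.mp hj)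
          have : (j : ℝ) ≤ (l : ℝ) := by exact_mod_cast this
          linarith
        exact this
      rw [min_eq_right hjl, max_eq_right (by linarith [Nat.cast_nonneg (α := ℝ) j])]
      have : ((j : ℝ) + 1) = ((j + 1 : ℕ) : ℝ) := by push_cast; ring
      rw [this, s17_sinN, zero_smul]

noncomputable def s17vext (n k : ℕ) (v : Fin (k + 1) → Euc n) : ℕ → Euc n :=
  fun j => if h : j < k + 1 then v ⟨j, h⟩ else 0

noncomputable def s17F (n k : ℕ) (z : GammaSp n k) : C(I, Euc n) :=
  ⟨fun t => sFx n z.1.1 (s17vext n k z.1.2) (k + 1) (((k : ℝ) + 1) * (t : ℝ)), by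
    have hx : Continuous fun t : I => ((k : ℝ) + 1) * (t : ℝ) :=
      continuous_const.mul continuous_subtype_val
    unfold sFx
    apply Continuous.add
    · exact (Real.continuous_cos.comp (continuous_const.mul hx)).smul continuous_const
    · apply continuous_finset_sum
      intro j _
      exact (Real.continuous_sin.comp
        (continuous_const.mul (continuous_const.max (hx.min continuous_const)))).smul
        continuous_const⟩

lemma s17F_cont (n k : ℕ) : Continuous (s17F n k) := by
  apply ContinuousMap.continuous_of_continuous_uncurry
  have hx : Continuous fun q : GammaSp n k × I => ((k : ℝ) + 1) * (q.2 : ℝ) :=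
    continuous_const.mul (continuous_subtype_val.comp continuous_snd)
  show Continuous fun q : GammaSp n k × I =>
    Real.cos (Real.pi * (((k : ℝ) + 1) * (q.2 : ℝ))) • q.1.1.1 +
      ∑ j ∈ Finset.range (k + 1),
        Real.sin (Real.pi * max (j : ℝ) (min (((k : ℝ) + 1) * (q.2 : ℝ)) ((j : ℝ) + 1))) •
          s17vext n k q.1.1.2 j
  apply Continuous.add
  · exact (Real.continuous_cos.comp (continuous_const.mul hx)).smul
      (continuous_fst.comp (continuous_subtype_val.comp continuous_fst))
  · apply continuous_finset_sum
    intro j hj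
    apply Continuous.fun_smul
    · exact Real.continuous_sin.comp
        (continuous_const.mul (continuous_const.max (hx.min continuous_const)))
    · have hjk : j < k + 1 := Finset.mem_range.mp hj
      simp only [s17vext, dif_pos hjk]
      exact (continuous_apply _).comp
        (continuous_snd.comp (continuous_subtype_val.comp continuous_fst))

lemma s17F_apply (n k : ℕ) (z : GammaSp n k) (t : I) :
    s17F n k z t = sFx n z.1.1 (s17vext n k z.1.2) (k + 1) (((k : ℝ) + 1) * (t : ℝ)) := rfl

/-- The completing-manifold embeddings
`f_k : Γ_k → C([0,1], S^n)`, defined piecewise by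
`f_k(p, v̄)(t) = γ_{((−1)^j p, (−1)^j v_j)}((k+1)t − j)` on `[j/(k+1), (j+1)/(k+1)]`, are
well-defined continuous maps, landing in `P_a S^n` for `k` even and in `Λ S^n` for `k`
odd; and for all even `l, m`, with `τ = (l+1)/(l+m+2)`, concatenation satisfies
`concat^τ(f_l(p, v̄), f_m(−p, w̄)) = f_{l+m+1}(p, v₀, …, v_l, −w₀, …, −w_m)`
(in particular the left-hand side is a loop). -/
theorem stmt_17 (n : ℕ) (hn : 1 ≤ n) :
    ∃ F : (k : ℕ) → GammaSp n k → C(I, Euc n),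
      (∀ k, Continuous (F k)) ∧
      -- the defining piecewise formula for `f_k`
      (∀ (k : ℕ) (z : GammaSp n k) (j : ℕ) (hj : j ≤ k) (t : I),
        (j : ℝ) / (k + 1) ≤ (t : ℝ) → (t : ℝ) ≤ ((j : ℝ) + 1) / (k + 1) →
        F k z t =
          Real.cos (Real.pi * ((k + 1) * (t : ℝ) - j)) • ((-1 : ℝ) ^ j • z.1.1) +
            Real.sin (Real.pi * ((k + 1) * (t : ℝ) - j)) •
              ((-1 : ℝ) ^ j • z.1.2 ⟨j, by omega⟩)) ∧
      -- the image consists of curves on the sphere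
      (∀ (k : ℕ) (z : GammaSp n k) (t : I), ‖F k z t‖ = 1) ∧
      -- for `k` even, `f_k(z)` is an antipodal path
      (∀ k, Even k → ∀ z : GammaSp n k, F k z 1 = -(F k z 0)) ∧
      -- for `k` odd, `f_k(z)` is a loop
      (∀ k, Odd k → ∀ z : GammaSp n k, F k z 1 = F k z 0) ∧
      -- compatibility with concatenation at `τ = (l+1)/(l+m+2)`
      (∀ l m : ℕ, Even l → Even m →
        ∀ (z : GammaSp n l) (w : GammaSp n m), w.1.1 = -z.1.1 →
          ∃ u : GammaSp n (l + m + 1),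
            u.1.1 = z.1.1 ∧
            (∀ i : Fin (l + m + 2),
              u.1.2 i =
                if h : (i : ℕ) ≤ l then z.1.2 ⟨(i : ℕ), by omega⟩
                else -(w.1.2 ⟨(i : ℕ) - (l + 1), by have := i.isLt; omega⟩)) ∧
            (∀ t : I, (t : ℝ) ≤ ((l : ℝ) + 1) / ((l : ℝ) + m + 2) →
              F (l + m + 1) u t =
                F l z (Set.projIcc (0 : ℝ) 1 zero_le_one
                  (((l : ℝ) + m + 2) / ((l : ℝ) + 1) * (t : ℝ)))) ∧
            (∀ t : I, ((l : ℝ) + 1) / ((l : ℝ) + m + 2) ≤ (t : ℝ) →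
              F (l + m + 1) u t =
                F m w (Set.projIcc (0 : ℝ) 1 zero_le_one
                  ((((l : ℝ) + m + 2) * (t : ℝ) - ((l : ℝ) + 1)) / ((m : ℝ) + 1)))) ∧
            -- in particular the concatenation is a loop
            F (l + m + 1) u 1 = F (l + m + 1) u 0) := by
  
  have hF0 : ∀ k (z : GammaSp n k), s17F n k z 0 = z.1.1 := by
    intro k z
    rw [s17F_apply, show (((0 : I)) : ℝ) = 0 from rfl, mul_zero, s17_at_zero]
  have hF1 : ∀ k (z : GammaSp n k), s17F n k z 1 = ((-1 : ℝ) ^ (k + 1)) • z.1.1 := by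
    intro k z
    rw [s17F_apply, show (((1 : I)) : ℝ) = 1 from rfl, mul_one,
      show ((k : ℝ) + 1) = ((k + 1 : ℕ) : ℝ) from by push_cast; ring, s17_at_top]
  refine ⟨s17F n, fun k => s17F_cont n k, ?_, ?_, ?_, ?_, ?_⟩
  · -- piecewise formula
    intro k z j hj t h1 h2
    have hk : (0 : ℝ) < (k : ℝ) + 1 := by positivity
    have hx1 : (j : ℝ) ≤ ((k : ℝ) + 1) * (t : ℝ) := by
      have := (div_le_iff₀ hk).mp h1; linarith
    have hx2 : ((k : ℝ) + 1) * (t : ℝ) ≤ (j : ℝ) + 1 := by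
      have := (le_div_iff₀ hk).mp h2; linarith
    rw [s17F_apply,
      s17_formula n z.1.1 (s17vext n k z.1.2) (k + 1) j (by omega) _ hx1 hx2]
    simp only [s17vext, dif_pos (show j < k + 1 by omega)]
  · -- norm 1
    intro k z t
    rw [s17F_apply]
    apply s17_norm n (k + 1) (Nat.succ_pos k) _ _ z.2.1
    · intro j hj
      simp only [s17vext, dif_pos hj]
      exact z.2.2 _
    · exact mul_nonneg (by positivity) t.2.1
    · rw [show (((k + 1 : ℕ)) : ℝ) = (k : ℝ) + 1 from by push_cast; ring]
      exact mul_le_of_le_one_right (by positivity) t.2.2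
  · -- even: antipodal
    intro k hk z
    rw [hF1, hF0, Odd.neg_one_pow (Even.add_one hk), neg_one_smul]
  · -- odd: loop
    intro k hk z
    rw [hF1, hF0, Even.neg_one_pow (Odd.add_one hk), one_smul]
  · -- concatenation
    intro l m hl hm z w hw
    set uv : Fin (l + m + 2) → Euc n := fun i =>
      if h : (i : ℕ) ≤ l then z.1.2 ⟨(i : ℕ), by omega⟩
      else -(w.1.2 ⟨(i : ℕ) - (l + 1), by have := i.isLt; omega⟩) with huv
    have humem : ‖z.1.1‖ = 1 ∧ ∀ i, ‖uv i‖ = 1 ∧ ⟪z.1.1, uv i⟫ = 0 := by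
      refine ⟨z.2.1, fun i => ?_⟩
      rw [huv]
      dsimp only
      split_ifs with h
      · exact z.2.2 _
      · constructor
        · rw [norm_neg]; exact (w.2.2 _).1
        · rw [inner_neg_right]
          have h2 := (w.2.2 ⟨(i : ℕ) - (l + 1), by have := i.isLt; omega⟩).2
          rw [hw, inner_neg_left] at h2
          rw [show ⟪z.1.1, w.1.2 ⟨(i : ℕ) - (l + 1), by have := i.isLt; omega⟩⟫ = 0 from by
            linarith [h2]]
          ring
    set u : GammaSp n (l + m + 1) := ⟨(z.1.1, uv), humem⟩ with hu
    have hu1 : u.1.1 = z.1.1 := rfl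
    have hu2 : u.1.2 = uv := rfl
    have hN : (0 : ℝ) < (l : ℝ) + m + 2 := by positivity
    have hl1 : (0 : ℝ) < (l : ℝ) + 1 := by positivity
    have hm1 : (0 : ℝ) < (m : ℝ) + 1 := by positivity
    have hKcast : ((((l + m + 1 : ℕ)) : ℝ) + 1) = (l : ℝ) + m + 2 := by push_cast; ring
    have hKnat : l + m + 1 + 1 = l + 1 + (m + 1) := by omega
    have hvleft : ∀ j ≤ l, s17vext n (l + m + 1) uv j = s17vext n l z.1.2 j := by
      intro j hjl
      have h1 : j < l + m + 1 + 1 := by omega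
      have h2 : j < l + 1 := by omega
      simp only [s17vext, dif_pos h1, dif_pos h2, huv]
      exact dif_pos hjl
    have hvright : ∀ i ≤ m, s17vext n (l + m + 1) uv (l + 1 + i) =
        -(s17vext n m w.1.2 i) := by
      intro i him
      have h1 : l + 1 + i < l + m + 1 + 1 := by omega
      have h2 : i < m + 1 := by omega
      simp only [s17vext, dif_pos h1, dif_pos h2, huv]
      rw [dif_neg (by omega : ¬ l + 1 + i ≤ l)]
      congr 1
      apply congrArg
      apply Fin.ext
      simp
    refine ⟨u, rfl, fun i => rfl, ?_, ?_, ?_⟩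
    · -- left half
      intro t ht
      have ht0 : (0 : ℝ) ≤ (t : ℝ) := t.2.1
      have hxt : ((l : ℝ) + m + 2) * (t : ℝ) ≤ (l : ℝ) + 1 := by
        have := (le_div_iff₀ hN).mp ht; linarith
      have hmem : ((l : ℝ) + m + 2) / ((l : ℝ) + 1) * (t : ℝ) ∈ Set.Icc (0 : ℝ) 1 := by
        constructor
        · positivity
        · rw [div_mul_eq_mul_div, div_le_one hl1]; linarith
      have hcoe : ((Set.projIcc (0 : ℝ) 1 zero_le_one
          (((l : ℝ) + m + 2) / ((l : ℝ) + 1) * (t : ℝ)) : I) : ℝ) =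
          ((l : ℝ) + m + 2) / ((l : ℝ) + 1) * (t : ℝ) := by
        rw [Set.projIcc_of_mem zero_le_one hmem]
      have harg : ((l : ℝ) + 1) * (((l : ℝ) + m + 2) / ((l : ℝ) + 1) * (t : ℝ)) =
          ((l : ℝ) + m + 2) * (t : ℝ) := by
        field_simp
      rw [s17F_apply, s17F_apply, hcoe, hu1, hu2, hKcast, harg, hKnat]
      exact s17_left n l (m + 1) z.1.1 _ _ hvleft _ hxt
    · -- right half
      intro t ht
      have ht1 : (t : ℝ) ≤ 1 := t.2.2
      have hxt : (l : ℝ) + 1 ≤ ((l : ℝ) + m + 2) * (t : ℝ) := by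
        have := (div_le_iff₀ hN).mp ht; linarith
      have hxt2 : ((l : ℝ) + m + 2) * (t : ℝ) ≤ (l : ℝ) + m + 2 :=
        mul_le_of_le_one_right (le_of_lt hN) ht1
      have hmem : (((l : ℝ) + m + 2) * (t : ℝ) - ((l : ℝ) + 1)) / ((m : ℝ) + 1) ∈
          Set.Icc (0 : ℝ) 1 := by
        constructor
        · apply div_nonneg _ (le_of_lt hm1); linarith
        · rw [div_le_one hm1]; linarith
      have hcoe : ((Set.projIcc (0 : ℝ) 1 zero_le_one
          ((((l : ℝ) + m + 2) * (t : ℝ) - ((l : ℝ) + 1)) / ((m : ℝ) + 1)) : I) : ℝ) =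
          (((l : ℝ) + m + 2) * (t : ℝ) - ((l : ℝ) + 1)) / ((m : ℝ) + 1) := by
        rw [Set.projIcc_of_mem zero_le_one hmem]
      have harg : ((m : ℝ) + 1) * ((((l : ℝ) + m + 2) * (t : ℝ) - ((l : ℝ) + 1)) / ((m : ℝ) + 1)) =
          ((l : ℝ) + m + 2) * (t : ℝ) - ((l : ℝ) + 1) := by
        field_simp
      rw [s17F_apply, s17F_apply, hcoe, hu1, hu2, hKcast, harg, hKnat, hw]
      exact s17_right n l m hl z.1.1 _ _ hvright _ hxt
    · -- loop
      rw [hF1, hF0, Even.neg_one_pow (by exact (Even.add (Even.add hl hm) even_two : Even (l + m + 2))), one_smul]
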